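/- (Lemma 2, existence part) Suppose x̄ ∈ ℝ^{N₁} has strictly increasing entries with consecutive gaps ≥ d_min and satisfies a(x̄,θ_k)^H a(x̄,θ₀) = 0 for k = 1,...,K₁. Assume cos θ_{K₁+1} ≠ cos θ₀. Let N₂ ≥ 2 and choose d = (q + 1/N₂)λ/|cos θ₀ − cos θ_{K₁+1}| with q an integer large enough that x̄₁ + d − x̄_{N₁} ≥ d_min. Then the vector x̂ ∈ ℝ^{N₁N₂} with x̂_{tN₁+m} = x̄_m + t·d satisfies: (i) a(x̂,θ_k)^H a(x̂,θ₀) = 0 for all k = 1,...,K₁+1, and (ii) |x̂_m − x̂_n| ≥ d_min for all m ≠ n. -/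

import Mathlib

open Complex Finset

private lemma key_conj (a b : ℝ) :
    (starRingEnd ℂ) (Complex.exp (Complex.I * (a:ℝ))) * Complex.exp (Complex.I * (b:ℝ)) =
      Complex.exp (Complex.I * ((b - a : ℝ) : ℂ)) := by
  rw [← Complex.exp_conj, map_mul, Complex.conj_I, Complex.conj_ofReal, ← Complex.exp_add]
  congr 1
  push_cast
  ring

private lemma geom_zero {ω : ℂ} (N : ℕ) (h1 : ω ≠ 1) (hN : ω ^ N = 1) :
    ∑ t : Fin N, ω ^ (t : ℕ) = 0 := by
  rw [Fin.sum_univ_eq_sum_range, geom_sum_eq h1, hN, sub_self, zero_div]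

private lemma aux_sum (N₂ : ℕ) (hN₂ : 2 ≤ N₂) (q : ℤ) (s : ℝ) (hs : s = 1 ∨ s = -1) :
    ∑ t : Fin N₂, Complex.exp (Complex.I *
      (((t : ℝ) * (2 * Real.pi * ((q : ℝ) + 1 / N₂) * s) : ℝ) : ℂ)) = 0 := by
  set c : ℝ := 2 * Real.pi * ((q : ℝ) + 1 / N₂) * s with hc
  set ω : ℂ := Complex.exp (Complex.I * (c : ℂ)) with hω
  have hN₂R : (2:ℝ) ≤ (N₂:ℝ) := by exact_mod_cast hN₂
  have hN₂0 : (N₂:ℝ) ≠ 0 := by positivity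
  have h0 : 0 < (1:ℝ)/N₂ := by positivity
  have h1 : (1:ℝ)/N₂ < 1 := by rw [div_lt_one (by linarith)]; linarith
  have hωt : ∀ t : Fin N₂,
      Complex.exp (Complex.I * (((t : ℝ) * c : ℝ) : ℂ)) = ω ^ (t : ℕ) := by
    intro t
    rw [hω, ← Complex.exp_nat_mul]
    congr 1
    push_cast
    ring
  have hω1 : ω ≠ 1 := by
    intro hcon
    rw [hω, Complex.exp_eq_one_iff] at hcon
    obtain ⟨n, hn⟩ := hcon
    have h2 : (c:ℂ) = (n:ℂ) * (2 * (Real.pi : ℂ)) :=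
      mul_left_cancel₀ Complex.I_ne_zero (by rw [hn]; ring)
    have h3 : c = (n:ℝ) * (2 * Real.pi) := by exact_mod_cast h2
    rcases hs with rfl | rfl
    · have hπ : (2*Real.pi) ≠ 0 := by positivity
      have h4' : (q:ℝ) + 1/N₂ = (n:ℝ) :=
        mul_left_cancel₀ hπ (by linear_combination h3)
      have h4 : (1:ℝ)/N₂ = ((n - q : ℤ) : ℝ) := by push_cast; linarith
      have h5 : (0:ℝ) < ((n - q : ℤ) : ℝ) := by rw [← h4]; exact h0
      have h6 : ((n - q : ℤ) : ℝ) < 1 := by rw [← h4]; exact h1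
      have h5' : (0:ℤ) < n - q := by exact_mod_cast h5
      have h6' : (n - q : ℤ) < 1 := by exact_mod_cast h6
      omega
    · have hπ : (2*Real.pi) ≠ 0 := by positivity
      have h4' : (q:ℝ) + 1/N₂ = -(n:ℝ) :=
        mul_left_cancel₀ hπ (by linear_combination -h3)
      have h4 : (1:ℝ)/N₂ = ((-n - q : ℤ) : ℝ) := by push_cast; linarith
      have h5 : (0:ℝ) < ((-n - q : ℤ) : ℝ) := by rw [← h4]; exact h0
      have h6 : ((-n - q : ℤ) : ℝ) < 1 := by rw [← h4]; exact h1
      have h5' : (0:ℤ) < -n - q := by exact_mod_cast h5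
      have h6' : (-n - q : ℤ) < 1 := by exact_mod_cast h6
      omega
  have hωN : ω ^ N₂ = 1 := by
    rw [hω, ← Complex.exp_nat_mul]
    rcases hs with rfl | rfl
    · have : (N₂:ℂ) * (Complex.I * (c:ℂ)) = ((q * N₂ + 1 : ℤ) : ℂ) * (2 * (Real.pi:ℂ) * Complex.I) := by
        rw [hc]; push_cast
        have hN₂0' : (N₂:ℂ) ≠ 0 := by exact_mod_cast hN₂0
        field_simp
      rw [this, Complex.exp_int_mul_two_pi_mul_I]
    · have : (N₂:ℂ) * (Complex.I * (c:ℂ)) = ((-(q * N₂ + 1) : ℤ) : ℂ) * (2 * (Real.pi:ℂ) * Complex.I) := by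
        rw [hc]; push_cast
        have hN₂0' : (N₂:ℂ) ≠ 0 := by exact_mod_cast hN₂0
        field_simp
      rw [this, Complex.exp_int_mul_two_pi_mul_I]
  calc ∑ t : Fin N₂, Complex.exp (Complex.I * (((t : ℝ) * c : ℝ) : ℂ))
      = ∑ t : Fin N₂, ω ^ (t : ℕ) := Finset.sum_congr rfl fun t _ => hωt t
    _ = 0 := geom_zero N₂ hω1 hωN

private lemma hc_neg (lam d Δ : ℝ) (N₂ : ℕ) (q : ℤ) (hlam : lam ≠ 0) (hΔ : Δ < 0)
    (hN₂0 : (N₂:ℝ) ≠ 0) (hd : d = ((q : ℝ) + 1 / N₂) * lam / |Δ|) :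
    (2 * Real.pi / lam) * d * Δ = 2 * Real.pi * ((q : ℝ) + 1 / N₂) * (-1) := by
  have hΔ' : Δ ≠ 0 := ne_of_lt hΔ
  rw [hd, abs_of_neg hΔ]
  field_simp

private lemma hc_pos (lam d Δ : ℝ) (N₂ : ℕ) (q : ℤ) (hlam : lam ≠ 0) (hΔ : 0 < Δ)
    (hN₂0 : (N₂:ℝ) ≠ 0) (hd : d = ((q : ℝ) + 1 / N₂) * lam / |Δ|) :
    (2 * Real.pi / lam) * d * Δ = 2 * Real.pi * ((q : ℝ) + 1 / N₂) * 1 := by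
  have hΔ' : Δ ≠ 0 := ne_of_gt hΔ
  rw [hd, abs_of_pos hΔ]
  field_simp

/-- Lemma 2 (existence part): composing a sub-array `x̄` satisfying the SVO condition
for `K₁` null directions with a uniform offset array of spacing
`d = (q + 1/N₂) λ / |cos θ₀ - cos θ_{K₁+1}|` yields an `N₁N₂`-element array satisfying
the SVO condition for all `K₁ + 1` null directions and the minimum-spacing constraint. -/
theorem stmt_4 (N₁ N₂ K₁ : ℕ) (hN₁ : 0 < N₁) (hN₂ : 2 ≤ N₂)
    (lam dmin : ℝ) (hlam : 0 < lam) (hdmin : 0 < dmin)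
    (θ₀ : ℝ) (θ : Fin (K₁ + 1) → ℝ)
    (xbar : Fin N₁ → ℝ) (hmono : StrictMono xbar)
    (hgap : ∀ i : Fin N₁, ∀ h : (i : ℕ) + 1 < N₁, xbar i + dmin ≤ xbar ⟨(i : ℕ) + 1, h⟩)
    (hSVO : ∀ k : Fin K₁,
      (∑ n : Fin N₁,
        (starRingEnd ℂ) (Complex.exp (Complex.I * ((2 * Real.pi / lam) * xbar n * Real.cos (θ k.castSucc) : ℝ))) *
          Complex.exp (Complex.I * ((2 * Real.pi / lam) * xbar n * Real.cos θ₀ : ℝ))) = 0)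
    (hcos : Real.cos (θ (Fin.last K₁)) ≠ Real.cos θ₀)
    (q : ℤ) (d : ℝ)
    (hd : d = ((q : ℝ) + 1 / N₂) * lam / |Real.cos θ₀ - Real.cos (θ (Fin.last K₁))|)
    (hq : dmin ≤ xbar ⟨0, hN₁⟩ + d - xbar ⟨N₁ - 1, Nat.sub_lt hN₁ Nat.one_pos⟩)
    (xhat : Fin N₂ × Fin N₁ → ℝ)
    (hxhat : ∀ t : Fin N₂, ∀ m : Fin N₁, xhat (t, m) = xbar m + (t : ℝ) * d) :
    (∀ k : Fin (K₁ + 1),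
      (∑ p : Fin N₂ × Fin N₁,
        (starRingEnd ℂ) (Complex.exp (Complex.I * ((2 * Real.pi / lam) * xhat p * Real.cos (θ k) : ℝ))) *
          Complex.exp (Complex.I * ((2 * Real.pi / lam) * xhat p * Real.cos θ₀ : ℝ))) = 0) ∧
    (∀ p r : Fin N₂ × Fin N₁, p ≠ r → dmin ≤ |xhat p - xhat r|) := by
  have hlam' : lam ≠ 0 := ne_of_gt hlam
  -- splitting the sum
  have hsplit : ∀ c : ℝ,
      (∑ p : Fin N₂ × Fin N₁,
        (starRingEnd ℂ) (Complex.exp (Complex.I * ((2 * Real.pi / lam) * xhat p * c : ℝ))) *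
          Complex.exp (Complex.I * ((2 * Real.pi / lam) * xhat p * Real.cos θ₀ : ℝ))) =
      (∑ t : Fin N₂, Complex.exp (Complex.I *
          (((t : ℝ) * ((2 * Real.pi / lam) * d * (Real.cos θ₀ - c)) : ℝ) : ℂ))) *
      (∑ m : Fin N₁, Complex.exp (Complex.I *
          (((2 * Real.pi / lam) * xbar m * (Real.cos θ₀ - c) : ℝ) : ℂ))) := by
    intro c
    rw [Finset.sum_mul_sum, Fintype.sum_prod_type]
    refine Finset.sum_congr rfl fun t _ => Finset.sum_congr rfl fun m _ => ?_
    rw [key_conj, ← Complex.exp_add]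
    congr 1
    rw [hxhat]
    push_cast
    ring
  constructor
  · intro k
    induction k using Fin.lastCases with
    | last =>
      rw [hsplit]
      have hΔ : Real.cos θ₀ - Real.cos (θ (Fin.last K₁)) ≠ 0 :=
        sub_ne_zero.mpr (Ne.symm hcos)
      have hN₂0 : (N₂:ℝ) ≠ 0 := by positivity
      rcases hΔ.lt_or_gt with hlt | hgt
      · have hc0 := hc_neg lam d _ N₂ q hlam' hlt hN₂0 hd
        have hc : ∀ t : Fin N₂,
            ((t : ℝ) * ((2 * Real.pi / lam) * d * (Real.cos θ₀ - Real.cos (θ (Fin.last K₁)))))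
              = (t : ℝ) * (2 * Real.pi * ((q : ℝ) + 1 / N₂) * (-1)) := fun t => by rw [hc0]
        rw [Finset.sum_congr rfl fun t _ => by rw [hc t], aux_sum N₂ hN₂ q (-1) (Or.inr rfl),
          zero_mul]
      · have hc0 := hc_pos lam d _ N₂ q hlam' hgt hN₂0 hd
        have hc : ∀ t : Fin N₂,
            ((t : ℝ) * ((2 * Real.pi / lam) * d * (Real.cos θ₀ - Real.cos (θ (Fin.last K₁)))))
              = (t : ℝ) * (2 * Real.pi * ((q : ℝ) + 1 / N₂) * 1) := fun t => by rw [hc0]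
        rw [Finset.sum_congr rfl fun t _ => by rw [hc t], aux_sum N₂ hN₂ q 1 (Or.inl rfl),
          zero_mul]
    | cast k' =>
      rw [hsplit]
      have hz : (∑ m : Fin N₁, Complex.exp (Complex.I *
          (((2 * Real.pi / lam) * xbar m * (Real.cos θ₀ - Real.cos (θ k'.castSucc)) : ℝ) : ℂ))) = 0 := by
        rw [← hSVO k']
        refine Finset.sum_congr rfl fun m _ => ?_
        rw [key_conj]
        congr 2
        push_cast
        ring
      rw [hz, mul_zero]
  · -- spacing
    have h0N : xbar ⟨0, hN₁⟩ ≤ xbar ⟨N₁ - 1, Nat.sub_lt hN₁ Nat.one_pos⟩ :=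
      hmono.monotone (by simp [Fin.le_def])
    have hdpos : 0 < d := by linarith
    have hstep : ∀ i j : Fin N₁, i < j → xbar i + dmin ≤ xbar j := by
      intro i j hij
      have hij' : (i : ℕ) + 1 ≤ (j : ℕ) := hij
      have h1 : (i : ℕ) + 1 < N₁ := lt_of_le_of_lt hij' j.isLt
      have h2 := hgap i h1
      have h3 : xbar ⟨(i : ℕ) + 1, h1⟩ ≤ xbar j := hmono.monotone (by simpa [Fin.le_def] using hij')
      linarith
    have hbound : ∀ m : Fin N₁, xbar ⟨0, hN₁⟩ ≤ xbar m ∧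
        xbar m ≤ xbar ⟨N₁ - 1, Nat.sub_lt hN₁ Nat.one_pos⟩ := by
      intro m
      constructor
      · exact hmono.monotone (by simp [Fin.le_def])
      · exact hmono.monotone (by have := m.isLt; simp [Fin.le_def]; omega)
    have habs2 : ∀ a b : ℝ, dmin ≤ a - b → dmin ≤ |a - b| := fun a b h =>
      h.trans (le_abs_self _)
    have habs : ∀ a b : ℝ, dmin ≤ b - a → dmin ≤ |a - b| := fun a b h => by
      rw [abs_sub_comm]; exact habs2 b a h
    rintro ⟨t, m⟩ ⟨u, n⟩ hne
    rw [hxhat, hxhat]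
    rcases Nat.lt_trichotomy (t : ℕ) (u : ℕ) with h | h | h
    · apply habs
      have h1 : ((t : ℕ) : ℝ) + 1 ≤ ((u : ℕ) : ℝ) := by exact_mod_cast h
      have hb1 := (hbound m).2
      have hb2 := (hbound n).1
      have hdd : ((t : ℕ) : ℝ) * d + d ≤ ((u : ℕ) : ℝ) * d := by nlinarith
      linarith
    · have htu : t = u := Fin.ext h
      have hmn : m ≠ n := by
        intro hmn'
        exact hne (by rw [htu, hmn'])
      have ht : ((t : ℕ) : ℝ) = ((u : ℕ) : ℝ) := by exact_mod_cast h
      have ht' : ((t : ℕ) : ℝ) * d = ((u : ℕ) : ℝ) * d := by rw [ht]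
      rcases hmn.lt_or_gt with hlt | hlt
      · apply habs
        have := hstep m n hlt
        linarith
      · apply habs2
        have := hstep n m hlt
        linarith
    · apply habs2
      have h1 : ((u : ℕ) : ℝ) + 1 ≤ ((t : ℕ) : ℝ) := by exact_mod_cast h
      have hb1 := (hbound n).2
      have hb2 := (hbound m).1
      have hdd : ((u : ℕ) : ℝ) * d + d ≤ ((t : ℕ) : ℝ) * d := by nlinarith
      linarith
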